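/- (Minkowski-type theorem, necessity.) Let R = ∂B be a nondegenerate convex reflector with focal function p. Then p is positive and bounded on Sⁿ, and whenever x, y, y₁, …, y_k ∈ Sⁿ and α₁, …, α_k ≥ 0 with Σᵢαᵢ > 0 satisfy x − y = Σ_{i=1}^{k} αᵢ(x − yᵢ) with the vectors x − y₁, …, x − y_k linearly independent, the inequality p(y) ≤ Σ_{i=1}^{k} αᵢ p(yᵢ) holds. -/
import Mathlib


open scoped InnerProductSpace ENNReal
open Metric Set

noncomputable section

/-- Euclidean space `ℝ^{n+1}`. -/
abbrev E (n : ℕ) : Type := EuclideanSpace ℝ (Fin (n + 1))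

/-- The unit sphere `Sⁿ` centered at the origin in `ℝ^{n+1}`. -/
def sph (n : ℕ) : Set (E n) := Metric.sphere (0 : E n) 1

/-- `B` is the convex body of a nondegenerate convex reflector: `B` is the intersection of the
solid confocal paraboloids `{X : ‖X‖ - ⟪X,y⟫ ≤ p̃ y}` for some `p̃ : Sⁿ → (0,∞]`
(encoded via `ENNReal`), `B` is compact and the origin is an interior point of `B`.
The reflector itself is `R = frontier B`. -/
def IsReflectorBody (n : ℕ) (B : Set (E n)) : Prop :=
  IsCompact B ∧ (0 : E n) ∈ interior B ∧
    ∃ pt : E n → ℝ≥0∞, (∀ y ∈ sph n, 0 < pt y) ∧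
      B = {X : E n | ∀ y ∈ sph n, ENNReal.ofReal (‖X‖ - ⟪X, y⟫_ℝ) ≤ pt y}

/-- The focal function `p(y) = sup_{X ∈ B} (‖X‖ - ⟪X, y⟫)` of the reflector `∂B`. -/
def focal (n : ℕ) (B : Set (E n)) (y : E n) : ℝ :=
  sSup ((fun X => ‖X‖ - ⟪X, y⟫_ℝ) '' B)

/-- The radial function `ρ(x) = sup {λ ≥ 0 : λ x ∈ B}`. -/
def radial (n : ℕ) (B : Set (E n)) (x : E n) : ℝ :=
  sSup {l : ℝ | 0 ≤ l ∧ l • x ∈ B}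

/-- The support function `h(U) = sup_{X ∈ B} ⟪X, U⟫`. -/
def suppFn (n : ℕ) (B : Set (E n)) (U : E n) : ℝ :=
  sSup ((fun X => ⟪X, U⟫_ℝ) '' B)

/-- The extended focal function `P(Y) = sup_{X ∈ B} (‖X‖‖Y‖ - ⟪X, Y⟫)` on all of `ℝ^{n+1}`. -/
def extFocal (n : ℕ) (B : Set (E n)) (Y : E n) : ℝ :=
  sSup ((fun X => ‖X‖ * ‖Y‖ - ⟪X, Y⟫_ℝ) '' B)

/-- The directrix `D(R) = {X - ‖X‖y : X ∈ R, y ∈ Sⁿ, ‖X‖ - ⟪X,y⟫ = p(y)}` of the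
reflector `R = frontier B`. -/
def directrix (n : ℕ) (B : Set (E n)) : Set (E n) :=
  {Z : E n | ∃ X ∈ frontier B, ∃ y ∈ sph n,
    ‖X‖ - ⟪X, y⟫_ℝ = focal n B y ∧ Z = X - ‖X‖ • y}

/-- Minkowski-type theorem, necessity: The focal function `p` of a
nondegenerate convex reflector is positive and bounded on `Sⁿ`, and whenever
`x, y, y₁, …, y_k ∈ Sⁿ`, `αᵢ ≥ 0`, `Σαᵢ > 0`, `x - y = Σ αᵢ (x - yᵢ)` with the vectors
`x - y₁, …, x - y_k` linearly independent, one has `p(y) ≤ Σ αᵢ p(yᵢ)`. -/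
lemma bdd_aux (n : ℕ) (B : Set (E n)) (hc : IsCompact B) (y : E n) :
    BddAbove ((fun X : E n => ‖X‖ - ⟪X, y⟫_ℝ) '' B) :=
  (hc.image (continuous_norm.sub ((continuous_id : Continuous fun X : E n => X).inner continuous_const))).bddAbove

theorem statement8 (n : ℕ) (hn : 1 ≤ n) (B : Set (E n)) (hB : IsReflectorBody n B) :
    (∀ y ∈ sph n, 0 < focal n B y) ∧
    (∃ M : ℝ, ∀ y ∈ sph n, focal n B y ≤ M) ∧
    (∀ x y : E n, x ∈ sph n → y ∈ sph n →
      ∀ (k : ℕ) (ys : Fin k → E n) (a : Fin k → ℝ),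
        (∀ i, ys i ∈ sph n) → (∀ i, 0 ≤ a i) → 0 < ∑ i, a i →
        x - y = ∑ i, a i • (x - ys i) →
        LinearIndependent ℝ (fun i => x - ys i) →
        focal n B y ≤ ∑ i, a i * focal n B (ys i)) := by
  obtain ⟨hcpt, h0, -⟩ := hB
  have h0B : (0 : E n) ∈ B := interior_subset h0
  refine ⟨?_, ?_, ?_⟩
  · -- positivity
    intro y hy
    have hy1 : ‖y‖ = 1 := mem_sphere_zero_iff_norm.mp hy
    obtain ⟨ε, hε, hball⟩ := Metric.mem_nhds_iff.mp (mem_interior_iff_mem_nhds.mp h0)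
    set X : E n := (-(ε/2)) • y with hX
    have hXB : X ∈ B := by
      apply hball
      simp only [mem_ball, dist_zero_right, hX, norm_smul, hy1, mul_one, Real.norm_eq_abs]
      rw [abs_of_nonpos (by linarith)]
      linarith
    have hXn : ‖X‖ = ε / 2 := by
      simp only [hX, norm_smul, hy1, mul_one, Real.norm_eq_abs]
      rw [abs_of_nonpos (by linarith)]; ring
    have hval : ‖X‖ - ⟪X, y⟫_ℝ = ε := by
      rw [hXn, hX, real_inner_smul_left, real_inner_self_eq_norm_sq, hy1]
      ring
    have := le_csSup (bdd_aux n B hcpt y) ⟨X, hXB, hval⟩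
    exact lt_of_lt_of_le hε this
  · -- boundedness
    obtain ⟨M, hM⟩ := isBounded_iff_forall_norm_le.mp hcpt.isBounded
    have hM0 : 0 ≤ M := le_trans (norm_nonneg _) (hM 0 h0B)
    refine ⟨2 * M, fun y hy => ?_⟩
    have hy1 : ‖y‖ = 1 := mem_sphere_zero_iff_norm.mp hy
    apply Real.sSup_le _ (by linarith)
    rintro v ⟨X, hXB, rfl⟩
    have h1 : ⟪X, y⟫_ℝ ≥ -(‖X‖ * ‖y‖) := neg_le_of_abs_le (abs_real_inner_le_norm X y)
    have h2 := hM X hXB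
    rw [hy1] at h1
    simp only
    linarith
  · -- main inequality
    intro x y hx hy k ys a hys ha hsum heq hli
    have hx1 : ‖x‖ = 1 := mem_sphere_zero_iff_norm.mp hx
    have hy1 : ‖y‖ = 1 := mem_sphere_zero_iff_norm.mp hy
    set s : ℝ := ∑ i, a i with hs
    -- step 1: s ≥ 1
    have hs1 : 1 ≤ s := by
      by_contra hlt
      push_neg at hlt
      -- take inner product of heq with y
      have hid : ⟪x, y⟫_ℝ - 1 = ∑ i, a i * (⟪x, y⟫_ℝ - ⟪ys i, y⟫_ℝ) := by
        have h := congrArg (fun v : E n => ⟪v, y⟫_ℝ) heq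
        simp only [inner_sub_left, sum_inner, real_inner_smul_left] at h
        rw [real_inner_self_eq_norm_sq, hy1] at h
        convert h using 2 <;> ring
      have hT : ∑ i, a i * (⟪x, y⟫_ℝ - ⟪ys i, y⟫_ℝ)
          = s * ⟪x, y⟫_ℝ - ∑ i, a i * ⟪ys i, y⟫_ℝ := by
        simp only [mul_sub, Finset.sum_sub_distrib, ← Finset.sum_mul, hs]
      have hA : ∑ i, a i * (1 - ⟪ys i, y⟫_ℝ)
          = s - ∑ i, a i * ⟪ys i, y⟫_ℝ := by
        simp only [mul_sub, mul_one, Finset.sum_sub_distrib, hs]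
      have hkey : (1 - s) * (1 - ⟪x, y⟫_ℝ) + ∑ i, a i * (1 - ⟪ys i, y⟫_ℝ) = 0 := by
        rw [hA]; rw [hT] at hid; nlinarith [hid]
      have hterm : ∀ i, 0 ≤ a i * (1 - ⟪ys i, y⟫_ℝ) := by
        intro i
        have : ⟪ys i, y⟫_ℝ ≤ 1 := by
          have := real_inner_le_norm (ys i) y
          rw [mem_sphere_zero_iff_norm.mp (hys i), hy1] at this
          linarith
        exact mul_nonneg (ha i) (by linarith)
      have hxy1 : ⟪x, y⟫_ℝ ≤ 1 := by
        have := real_inner_le_norm x y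
        rw [hx1, hy1] at this; linarith
      have hsum0 : ∑ i, a i * (1 - ⟪ys i, y⟫_ℝ) = 0 := by
        have h1 : 0 ≤ (1 - s) * (1 - ⟪x, y⟫_ℝ) :=
          mul_nonneg (by linarith) (by linarith)
        have h2 : 0 ≤ ∑ i, a i * (1 - ⟪ys i, y⟫_ℝ) :=
          Finset.sum_nonneg fun i _ => hterm i
        linarith
      have hfirst : (1 - s) * (1 - ⟪x, y⟫_ℝ) = 0 := by linarith
      have hxeqy : x = y := by
        have : ⟪x, y⟫_ℝ = 1 := by
          rcases mul_eq_zero.mp hfirst with h | h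
          · exact absurd h (by intro h'; linarith)
          · linarith
        exact (inner_eq_one_iff_of_norm_eq_one hx1 hy1).mp this
      obtain ⟨i₀, hi₀⟩ : ∃ i, 0 < a i := by
        by_contra hno
        push_neg at hno
        have : s = 0 := le_antisymm (Finset.sum_nonpos fun i _ => hno i)
          (Finset.sum_nonneg fun i _ => ha i)
        rw [hs] at hsum; linarith [hsum]
      have : a i₀ * (1 - ⟪ys i₀, y⟫_ℝ) = 0 :=
        (Finset.sum_eq_zero_iff_of_nonneg fun i _ => hterm i).mp hsum0 i₀ (Finset.mem_univ i₀)
      have hyi : ⟪ys i₀, y⟫_ℝ = 1 := by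
        rcases mul_eq_zero.mp this with h | h
        · exact absurd h (ne_of_gt hi₀)
        · linarith
      have : ys i₀ = y :=
        (inner_eq_one_iff_of_norm_eq_one (mem_sphere_zero_iff_norm.mp (hys i₀)) hy1).mp hyi
      exact hli.ne_zero i₀ (by rw [this, hxeqy, sub_self])
    -- step 2: pointwise estimate and sup
    have hfnn : ∀ i, 0 ≤ focal n B (ys i) := by
      intro i
      have : (0 : ℝ) ∈ (fun X => ‖X‖ - ⟪X, ys i⟫_ℝ) '' B :=
        ⟨0, h0B, by simp⟩
      exact le_csSup (bdd_aux n B hcpt (ys i)) this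
    apply Real.sSup_le
    · rintro v ⟨X, hXB, rfl⟩
      have hXy : ⟪X, y⟫_ℝ = ⟪X, x⟫_ℝ - ∑ i, a i * (⟪X, x⟫_ℝ - ⟪X, ys i⟫_ℝ) := by
        have h := congrArg (fun v : E n => ⟪X, v⟫_ℝ) heq
        simp only [inner_sub_right, inner_sum, real_inner_smul_right] at h
        linarith [h]
      have hS1 : ∑ i, a i * (⟪X, x⟫_ℝ - ⟪X, ys i⟫_ℝ)
          = s * ⟪X, x⟫_ℝ - ∑ i, a i * ⟪X, ys i⟫_ℝ := by
        simp only [mul_sub, Finset.sum_sub_distrib, ← Finset.sum_mul, hs]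
      have hS2 : ∑ i, a i * (‖X‖ - ⟪X, ys i⟫_ℝ)
          = s * ‖X‖ - ∑ i, a i * ⟪X, ys i⟫_ℝ := by
        simp only [mul_sub, Finset.sum_sub_distrib, ← Finset.sum_mul, hs]
      have hstep : ‖X‖ - ⟪X, y⟫_ℝ ≤ ∑ i, a i * (‖X‖ - ⟪X, ys i⟫_ℝ) := by
        rw [hXy, hS1, hS2]
        have hip : ⟪X, x⟫_ℝ ≤ ‖X‖ := by
          have := real_inner_le_norm X x
          rw [hx1] at this; linarith
        nlinarith
      refine le_trans hstep (Finset.sum_le_sum fun i _ => ?_)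
      have hfi : ‖X‖ - ⟪X, ys i⟫_ℝ ≤ focal n B (ys i) :=
        le_csSup (bdd_aux n B hcpt (ys i)) ⟨X, hXB, rfl⟩
      exact mul_le_mul_of_nonneg_left hfi (ha i)
    · exact Finset.sum_nonneg fun i _ => mul_nonneg (ha i) (hfnn i)
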